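/- The determinant of the row-adjusted GCD matrix of the set {1, 2, …, n} satisfies det (f_i(gcd(i,j)))_{i,j=1}^{n} = Π_{i=1}^{n} Σ_{j | i} f_i(j) μ(i/j) = Π_{i=1}^{n} (f_i ∗ μ)(i). -/

import Mathlib

open Finset Matrix ArithmeticFunction

private lemma moebius_inv_sum (F : ArithmeticFunction ℂ) (m : ℕ) :
    ∑ d ∈ m.divisors, ∑ j ∈ d.divisors, F j * (moebius (d / j) : ℂ) = F m := by
  have h : ∀ d, ∑ j ∈ d.divisors, F j * (moebius (d / j) : ℂ)
      = (F * (moebius : ArithmeticFunction ℂ)) d := by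
    intro d
    rw [ArithmeticFunction.mul_apply,
      ← Nat.sum_divisorsAntidiagonal (fun a b => F a * (moebius b : ℂ))]
    simp
  simp_rw [h]
  rw [← coe_mul_zeta_apply, mul_assoc, coe_moebius_mul_coe_zeta, mul_one]

theorem row_adjusted_gcd_matrix_det (n : ℕ) (f : ℕ → ℕ → ℂ) :
    (Matrix.of fun i j : Fin n =>
        f (i.1 + 1) (Nat.gcd (i.1 + 1) (j.1 + 1))).det =
      ∏ i ∈ Finset.Icc 1 n, ∑ j ∈ Nat.divisors i, f i j * (moebius (i / j) : ℂ) := by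
  set g : ℕ → ℕ → ℂ := fun i m => ∑ j ∈ m.divisors, f i j * (moebius (m / j) : ℂ) with hg
  -- Möbius inversion: summing g over divisors of m recovers f i m (for m ≠ 0)
  have key : ∀ i m : ℕ, m ≠ 0 → ∑ d ∈ m.divisors, g i d = f i m := by
    intro i m hm
    set F : ArithmeticFunction ℂ := ⟨fun k => if k = 0 then 0 else f i k, if_pos rfl⟩ with hF
    have hFk : ∀ k, k ≠ 0 → F k = f i k := fun k hk => if_neg hk
    have hgF : ∀ d, g i d = ∑ j ∈ d.divisors, F j * (moebius (d / j) : ℂ) := by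
      intro d
      refine Finset.sum_congr rfl fun j hj => ?_
      rw [hFk j (Nat.pos_of_mem_divisors hj).ne']
    simp_rw [hgF]
    rw [moebius_inv_sum, hFk m hm]
  set A : Matrix (Fin n) (Fin n) ℂ :=
    Matrix.of fun i d => if (d.1 + 1) ∣ (i.1 + 1) then g (i.1 + 1) (d.1 + 1) else 0 with hA
  set B : Matrix (Fin n) (Fin n) ℂ :=
    Matrix.of fun d j => if (d.1 + 1) ∣ (j.1 + 1) then 1 else 0 with hB
  have hfact : (Matrix.of fun i j : Fin n =>
      f (i.1 + 1) (Nat.gcd (i.1 + 1) (j.1 + 1))) = A * B := by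
    ext i j
    rw [Matrix.mul_apply]
    set m := Nat.gcd (i.1 + 1) (j.1 + 1) with hm
    have hm0 : m ≠ 0 := Nat.gcd_pos_of_pos_left _ (Nat.succ_pos _) |>.ne'
    have hentry : ∀ d : Fin n, A i d * B d j
        = if (d.1 + 1) ∣ m then g (i.1 + 1) (d.1 + 1) else 0 := by
      intro d
      simp only [hA, hB, Matrix.of_apply, hm, Nat.dvd_gcd_iff]
      by_cases h1 : (d.1 + 1) ∣ (i.1 + 1) <;> by_cases h2 : (d.1 + 1) ∣ (j.1 + 1) <;>
        simp [h1, h2]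
    simp_rw [hentry]
    rw [Fin.sum_univ_eq_sum_range (fun d => if (d + 1) ∣ m then g (i.1 + 1) (d + 1) else 0)]
    have himg : (Finset.range n).image (· + 1) = Finset.Icc 1 n := by
      ext k
      simp only [Finset.mem_image, Finset.mem_range, Finset.mem_Icc]
      constructor
      · rintro ⟨a, ha, rfl⟩; omega
      · rintro ⟨h1, h2⟩; exact ⟨k - 1, by omega, by omega⟩
    have hicc : ∑ d ∈ Finset.range n, (if (d + 1) ∣ m then g (i.1 + 1) (d + 1) else 0)
        = ∑ k ∈ Finset.Icc 1 n, (if k ∣ m then g (i.1 + 1) k else 0) := by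
      rw [← himg, Finset.sum_image (f := fun k => if k ∣ m then g (i.1 + 1) k else 0)
        (g := fun a => a + 1) (fun a _ b _ h => by simpa using h)]
    rw [hicc]
    have hsub : m.divisors ⊆ Finset.Icc 1 n := by
      intro k hk
      rw [Nat.mem_divisors] at hk
      have hk1 : 1 ≤ k := Nat.pos_of_dvd_of_pos hk.1 (Nat.pos_of_ne_zero hm0)
      have : m ≤ i.1 + 1 := Nat.le_of_dvd (Nat.succ_pos _) (Nat.gcd_dvd_left _ _)
      have : k ≤ n := le_trans (Nat.le_of_dvd (Nat.pos_of_ne_zero hm0) hk.1)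
        (le_trans this i.2)
      exact Finset.mem_Icc.mpr ⟨hk1, this⟩
    rw [← Finset.sum_subset hsub (fun k hk hk2 => by
      rw [if_neg]; intro hd; exact hk2 (Nat.mem_divisors.mpr ⟨hd, hm0⟩))]
    rw [Matrix.of_apply, ← hm, ← key (i.1 + 1) m hm0]
    exact Finset.sum_congr rfl fun k hk => (if_pos (Nat.mem_divisors.mp hk).1).symm
  rw [hfact, Matrix.det_mul]
  have hdetB : B.det = 1 := by
    rw [Matrix.det_of_upperTriangular (M := B) (fun d j hj => by
      rw [hB, Matrix.of_apply, if_neg]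
      intro hd; have := Nat.le_of_dvd (Nat.succ_pos _) hd; simp at hj; omega)]
    simp [hB]
  have hdetA : A.det = ∏ i : Fin n, g (i.1 + 1) (i.1 + 1) := by
    rw [Matrix.det_of_lowerTriangular A (fun i d hd => by
      rw [hA, Matrix.of_apply, if_neg]
      intro h; have := Nat.le_of_dvd (Nat.succ_pos _) h
      simp [OrderDual.toDual_lt_toDual] at hd; omega)]
    refine Finset.prod_congr rfl fun i _ => ?_
    rw [hA, Matrix.of_apply, if_pos dvd_rfl]
  rw [hdetA, hdetB, mul_one]
  have himg : (Finset.range n).image (· + 1) = Finset.Icc 1 n := by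
    ext k
    simp only [Finset.mem_image, Finset.mem_range, Finset.mem_Icc]
    constructor
    · rintro ⟨a, ha, rfl⟩; omega
    · rintro ⟨h1, h2⟩; exact ⟨k - 1, by omega, by omega⟩
  rw [Fin.prod_univ_eq_prod_range (fun i => g (i + 1) (i + 1)), ← himg,
    Finset.prod_image (g := fun a => a + 1) (fun a _ b _ h => by simpa using h)]
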